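/- Let φ : ℝ → ℝ be a C³, 2π-periodic solution of φ̈ + |φ|^{1/2}φ = 0 that is odd, satisfies φ(τ+π) = −φ(τ), and φ(τ) ≥ 0 on [0,π]. Define z : ℝ → ℝ as the 2π-periodic extension of z(τ) = (1/2π)(φ̇(0)(2τ+π) − 2πφ̇(τ)) for τ ∈ [−π,0] and z(τ) = (1/2π)φ̇(0)(2τ−π) for τ ∈ [0,π]. Then z is well-defined and of class C¹ on ℝ, ∫_{−π}^{π} z(τ)dτ = 0, and z is twice differentiable with z̈(τ) = V''(φ(τ))φ̇(τ) for all τ ∈ ℝ. -/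

import Mathlib

open Real

/-- Second derivative of the Hertzian potential: `V''(x) = (3/2)(max(-x,0))^(1/2)`. -/
noncomputable def V'' (x : ℝ) : ℝ := (3/2) * (max (-x) 0) ^ ((1:ℝ)/2)

lemma zero_rpow_half : (0:ℝ) ^ ((1:ℝ)/2) = 0 := Real.zero_rpow (by norm_num)
lemma zero_rpow_3half : (0:ℝ) ^ ((3:ℝ)/2) = 0 := Real.zero_rpow (by norm_num)

/-- `x ↦ (max x 0)^(3/2)` is differentiable with derivative `(3/2)(max x 0)^(1/2)`. -/
lemma hasDerivAt_maxrpow (x : ℝ) :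
    HasDerivAt (fun y : ℝ => (max y 0) ^ ((3:ℝ)/2)) ((3/2) * (max x 0) ^ ((1:ℝ)/2)) x := by
  rcases lt_trichotomy x 0 with hx | hx | hx
  · rw [max_eq_right hx.le, zero_rpow_half, mul_zero]
    have hev : (fun y : ℝ => (max y 0) ^ ((3:ℝ)/2)) =ᶠ[nhds x] fun _ => (0:ℝ) := by
      filter_upwards [Iio_mem_nhds hx] with y hy
      simp [max_eq_right (Set.mem_Iio.mp hy).le, zero_rpow_3half]
    exact (hasDerivAt_const x (0:ℝ)).congr_of_eventuallyEq hev
  · subst hx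
    have h0 : (3/2 : ℝ) * (max (0:ℝ) 0) ^ ((1:ℝ)/2) = 0 := by
      simp [zero_rpow_half]
    rw [h0, hasDerivAt_iff_tendsto_slope]
    apply squeeze_zero_norm' (a := fun y : ℝ => |y| ^ ((1:ℝ)/2))
    · filter_upwards [self_mem_nhdsWithin] with y (hy : y ≠ 0)
      have hy' : (0:ℝ) < |y| := abs_pos.mpr hy
      have hb : (max y 0) ^ ((3:ℝ)/2) ≤ |y| ^ ((3:ℝ)/2) := by
        apply Real.rpow_le_rpow (le_max_right _ _) _ (by norm_num)
        rcases le_or_gt y 0 with h | h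
        · rw [max_eq_right h]; positivity
        · rw [max_eq_left h.le]; exact le_abs_self y
      have hnn : (0:ℝ) ≤ (max y 0) ^ ((3:ℝ)/2) :=
        Real.rpow_nonneg (le_max_right _ _) _
      have hslope : slope (fun y : ℝ => (max y 0) ^ ((3:ℝ)/2)) 0 y
          = (max y 0) ^ ((3:ℝ)/2) / y := by
        simp [slope, zero_rpow_3half, div_eq_inv_mul]
      rw [hslope, norm_div, Real.norm_eq_abs, Real.norm_eq_abs,
        abs_of_nonneg hnn, div_le_iff₀ hy']
      calc (max y 0) ^ ((3:ℝ)/2) ≤ |y| ^ ((3:ℝ)/2) := hb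
        _ = |y| ^ ((1:ℝ)/2) * |y| := by
            rw [show (3:ℝ)/2 = 1/2 + 1 by norm_num, Real.rpow_add hy', Real.rpow_one]
    · have hc : ContinuousAt (fun y : ℝ => |y| ^ ((1:ℝ)/2)) 0 :=
        (Real.continuousAt_rpow_const _ _ (Or.inr (by norm_num))).comp
          continuous_abs.continuousAt
      have := hc.tendsto
      simp only [abs_zero, zero_rpow_half] at this
      exact this.mono_left nhdsWithin_le_nhds
  · have hev : (fun y : ℝ => (max y 0) ^ ((3:ℝ)/2)) =ᶠ[nhds x] fun y => y ^ ((3:ℝ)/2) := by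
      filter_upwards [Ioi_mem_nhds hx] with y hy
      rw [max_eq_left (le_of_lt hy)]
    have h := Real.hasDerivAt_rpow_const (x := x) (p := (3:ℝ)/2) (Or.inl hx.ne')
    have h2 : ((3:ℝ)/2) * x ^ ((3:ℝ)/2 - 1) = (3/2) * (max x 0) ^ ((1:ℝ)/2) := by
      rw [max_eq_left hx.le]; norm_num
    rw [← h2]
    exact h.congr_of_eventuallyEq hev
  
lemma abs_rpow_mul (x : ℝ) :
    |x| ^ ((1:ℝ)/2) * x = (max x 0) ^ ((3:ℝ)/2) - (max (-x) 0) ^ ((3:ℝ)/2) := by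
  rcases lt_trichotomy x 0 with hx | hx | hx
  · have h0 : (0:ℝ) < -x := by linarith
    rw [abs_of_neg hx, max_eq_right hx.le, max_eq_left h0.le, zero_rpow_3half]
    have key : (-x) ^ ((3:ℝ)/2) = (-x) ^ ((1:ℝ)/2) * (-x) := by
      rw [show (3:ℝ)/2 = 1/2 + 1 by norm_num, Real.rpow_add h0, Real.rpow_one]
    linarith [key]
  · subst hx; simp [zero_rpow_3half, zero_rpow_half]
  · rw [abs_of_pos hx, max_eq_left hx.le, max_eq_right (by linarith : -x ≤ 0), zero_rpow_3half]
    have key : x ^ ((3:ℝ)/2) = x ^ ((1:ℝ)/2) * x := by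
      rw [show (3:ℝ)/2 = 1/2 + 1 by norm_num, Real.rpow_add hx, Real.rpow_one]
    linarith [key]

/-- Auxiliary: `g = (max (-φ) 0)^(3/2)`. -/
noncomputable def gAux (φ : ℝ → ℝ) (τ : ℝ) : ℝ := (max (-φ τ) 0) ^ ((3:ℝ)/2)

/-- Auxiliary: the candidate solution. -/
noncomputable def zAux (φ : ℝ → ℝ) (τ : ℝ) : ℝ :=
  deriv φ 0 * τ / π - deriv φ 0 / 2 - ∫ s in (0:ℝ)..τ, gAux φ s

/-- The explicit zero-mean 2π-periodic solution `z₊` of `z̈ = V''(φ)φ̇`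
(formula (sol-3-plus) in Lemma 2 of the paper). -/
theorem explicit_solution_z_plus
    (φ : ℝ → ℝ) (hφ : ContDiff ℝ 3 φ)
    (hper : Function.Periodic φ (2 * π))
    (hode : ∀ τ, deriv (deriv φ) τ + |φ τ| ^ ((1:ℝ)/2) * φ τ = 0)
    (hodd : ∀ τ, φ (-τ) = -φ τ)
    (hanti : ∀ τ, φ (τ + π) = -φ τ)
    (hpos : ∀ τ ∈ Set.Icc (0:ℝ) π, 0 ≤ φ τ) :
    ∃ z : ℝ → ℝ,
      Function.Periodic z (2 * π) ∧
      (∀ τ ∈ Set.Icc (-π) (0:ℝ),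
        z τ = (1/(2 * π)) * (deriv φ 0 * (2 * τ + π) - 2 * π * deriv φ τ)) ∧
      (∀ τ ∈ Set.Icc (0:ℝ) π,
        z τ = (1/(2 * π)) * (deriv φ 0 * (2 * τ - π))) ∧
      ContDiff ℝ 1 z ∧
      (∫ τ in (-π)..π, z τ) = 0 ∧
      (∀ τ, HasDerivAt (deriv z) (V'' (φ τ) * deriv φ τ) τ) := by
  have hπ : (0:ℝ) < π := Real.pi_pos
  have hπ' : π ≠ 0 := ne_of_gt hπ
  -- differentiability bookkeeping
  have hφd : Differentiable ℝ φ := hφ.differentiable (by norm_num)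
  have h31 : (3 : WithTop ℕ∞) = 2 + 1 := by norm_num
  have hφ' : ContDiff ℝ 2 (deriv φ) := ((contDiff_succ_iff_deriv).mp (h31 ▸ hφ)).2.2
  have hφ'd : Differentiable ℝ (deriv φ) := hφ'.differentiable (by norm_num)
  have hφ'c : Continuous (deriv φ) := hφ'.continuous
  have hd1 : ∀ τ, HasDerivAt φ (deriv φ τ) τ := fun τ => (hφd τ).hasDerivAt
  -- derivative symmetry identities
  have hder_even : ∀ τ, deriv φ (-τ) = deriv φ τ := by
    intro τ
    have h1 : HasDerivAt (fun s : ℝ => φ (-s)) (deriv φ (-τ) * (-1)) τ :=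
      (hd1 (-τ)).comp τ (hasDerivAt_neg τ)
    have h2 : HasDerivAt (fun s : ℝ => -φ s) (-(deriv φ τ)) τ := (hd1 τ).neg
    have h3 : (fun s : ℝ => φ (-s)) = fun s => -φ s := funext hodd
    rw [h3] at h1
    have := h1.unique h2
    linarith
  have hder_anti : ∀ τ, deriv φ (τ + π) = -(deriv φ τ) := by
    intro τ
    have h1 : HasDerivAt (fun s : ℝ => φ (s + π)) (deriv φ (τ + π) * 1) τ :=
      (hd1 (τ + π)).comp τ ((hasDerivAt_id τ).add_const π)
    have h2 : HasDerivAt (fun s : ℝ => -φ s) (-(deriv φ τ)) τ := (hd1 τ).neg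
    have h3 : (fun s : ℝ => φ (s + π)) = fun s => -φ s := funext hanti
    rw [h3] at h1
    have := h1.unique h2
    linarith
  set c := deriv φ 0 with hc
  have hcmπ : deriv φ (-π) = -c := by
    have h1 := hder_even π
    have h2 := hder_anti 0
    rw [zero_add] at h2
    rw [h1, h2]
  -- values of φ
  have hφ0 : φ 0 = 0 := by have := hodd 0; rw [neg_zero] at this; linarith
  have hφπ : φ π = 0 := by have := hanti 0; rw [zero_add, hφ0] at this; simpa using this
  have hφmπ : φ (-π) = 0 := by rw [hodd π, hφπ, neg_zero]
  have hneg : ∀ τ ∈ Set.Icc (-π) (0:ℝ), φ τ ≤ 0 := by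
    intro τ hτ
    have h := hpos (-τ) ⟨by linarith [hτ.2], by linarith [hτ.1]⟩
    rw [hodd τ] at h
    linarith
  -- facts about g
  have hgd : ∀ τ, HasDerivAt (gAux φ) (-(V'' (φ τ) * deriv φ τ)) τ := by
    intro τ
    have h1 := (hasDerivAt_maxrpow (-φ τ)).comp τ (hd1 τ).neg
    have h2 : (3/2 : ℝ) * (max (-φ τ) 0) ^ ((1:ℝ)/2) * -(deriv φ τ)
        = -(V'' (φ τ) * deriv φ τ) := by
      simp only [V'']; ring
    rw [← h2]
    exact h1
  have hgc : Continuous (gAux φ) :=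
    continuous_iff_continuousAt.mpr fun τ => (hgd τ).continuousAt
  have hgper : Function.Periodic (gAux φ) (2*π) := by
    intro τ; simp [gAux, hper τ]
  have hFc : Continuous fun τ => (max (φ τ) 0) ^ ((3:ℝ)/2) :=
    continuous_iff_continuousAt.mpr fun τ =>
      ((hasDerivAt_maxrpow (φ τ)).continuousAt).comp (hφd τ).continuousAt
  have hdd : ∀ τ, deriv (deriv φ) τ = gAux φ τ - (max (φ τ) 0) ^ ((3:ℝ)/2) := by
    intro τ
    have h := hode τ
    have h2 := abs_rpow_mul (φ τ)
    simp only [gAux]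
    linarith
  have hddc : Continuous (deriv (deriv φ)) := by
    have : (deriv (deriv φ)) = fun τ => gAux φ τ - (max (φ τ) 0) ^ ((3:ℝ)/2) :=
      funext hdd
    rw [this]; exact hgc.sub hFc
  have hg_eq : ∀ τ, φ τ ≤ 0 → gAux φ τ = deriv (deriv φ) τ := by
    intro τ h
    rw [hdd τ, max_eq_right h, zero_rpow_3half, sub_zero]
  have hg_zero : ∀ τ, 0 ≤ φ τ → gAux φ τ = 0 := by
    intro τ h
    simp only [gAux]
    rw [max_eq_right (by linarith : -φ τ ≤ 0), zero_rpow_3half]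
  -- the primitive G
  have hGd : ∀ τ, HasDerivAt (fun u => ∫ s in (0:ℝ)..u, gAux φ s) (gAux φ τ) τ :=
    fun τ => (hgc.integral_hasStrictDerivAt 0 τ).hasDerivAt
  have hGpos : ∀ τ ∈ Set.Icc (0:ℝ) π, (∫ s in (0:ℝ)..τ, gAux φ s) = 0 := by
    intro τ hτ
    have hcong : Set.EqOn (gAux φ) (fun _ => (0:ℝ)) (Set.uIcc 0 τ) := by
      intro s hs
      rw [Set.uIcc_of_le hτ.1] at hs
      exact hg_zero s (hpos s ⟨hs.1, le_trans hs.2 hτ.2⟩)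
    rw [intervalIntegral.integral_congr hcong, intervalIntegral.integral_zero]
  have hGneg : ∀ τ ∈ Set.Icc (-π) (0:ℝ),
      (∫ s in (0:ℝ)..τ, gAux φ s) = deriv φ τ - c := by
    intro τ hτ
    have hcong : Set.EqOn (gAux φ) (deriv (deriv φ)) (Set.uIcc 0 τ) := by
      intro s hs
      rw [Set.uIcc_of_ge hτ.2] at hs
      exact hg_eq s (hneg s ⟨le_trans hτ.1 hs.1, hs.2⟩)
    rw [intervalIntegral.integral_congr hcong,
      intervalIntegral.integral_deriv_eq_sub (fun s _ => hφ'd s)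
        (hddc.intervalIntegrable 0 τ)]
  -- key integral over a full period
  have hg_period_int : ∀ τ : ℝ, (∫ s in τ..(τ + 2*π), gAux φ s) = 2*c := by
    intro τ
    rw [hgper.intervalIntegral_add_eq τ (-π), show -π + 2*π = π by ring]
    rw [← intervalIntegral.integral_add_adjacent_intervals (a := -π) (b := 0) (c := π)
      (hgc.intervalIntegrable _ _) (hgc.intervalIntegrable _ _)]
    have h1 : (∫ s in (-π:ℝ)..0, gAux φ s) = 2*c := by
      have hcong : Set.EqOn (gAux φ) (deriv (deriv φ)) (Set.uIcc (-π) 0) := by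
        intro s hs
        rw [Set.uIcc_of_le (by linarith : -π ≤ (0:ℝ))] at hs
        exact hg_eq s (hneg s hs)
      rw [intervalIntegral.integral_congr hcong,
        intervalIntegral.integral_deriv_eq_sub (fun s _ => hφ'd s)
          (hddc.intervalIntegrable _ _), hcmπ]
      ring
    have h2 : (∫ s in (0:ℝ)..π, gAux φ s) = 0 := by
      have hcong : Set.EqOn (gAux φ) (fun _ => (0:ℝ)) (Set.uIcc 0 π) := by
        intro s hs
        rw [Set.uIcc_of_le hπ.le] at hs
        exact hg_zero s (hpos s hs)
      rw [intervalIntegral.integral_congr hcong, intervalIntegral.integral_zero]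
    rw [h1, h2]; ring
  -- z and its properties
  have hzd : ∀ τ, HasDerivAt (zAux φ) (c/π - gAux φ τ) τ := by
    intro τ
    have h1 : HasDerivAt (fun τ : ℝ => c * τ / π - c/2) (c/π) τ := by
      have := (((hasDerivAt_id τ).const_mul c).div_const π).sub_const (c/2)
      simpa using this
    have := h1.sub (hGd τ)
    exact this
  have hzper : Function.Periodic (zAux φ) (2*π) := by
    intro τ
    have hsplit := intervalIntegral.integral_add_adjacent_intervals
      (a := (0:ℝ)) (b := τ) (c := τ + 2*π) (μ := MeasureTheory.volume)
      (hgc.intervalIntegrable _ _) (hgc.intervalIntegrable _ _)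
    have hv := hg_period_int τ
    simp only [zAux, ← hc]
    rw [← hsplit, hv]
    field_simp
    ring
  have hz_neg : ∀ τ ∈ Set.Icc (-π) (0:ℝ),
      zAux φ τ = (1/(2 * π)) * (c * (2 * τ + π) - 2 * π * deriv φ τ) := by
    intro τ hτ
    simp only [zAux, ← hc]
    rw [hGneg τ hτ]
    field_simp
    ring
  have hz_pos : ∀ τ ∈ Set.Icc (0:ℝ) π,
      zAux φ τ = (1/(2 * π)) * (c * (2 * τ - π)) := by
    intro τ hτ
    simp only [zAux, ← hc]
    rw [hGpos τ hτ]
    field_simp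
    ring
  have hzderiv : deriv (zAux φ) = fun τ => c/π - gAux φ τ :=
    funext fun τ => (hzd τ).deriv
  have hz1 : ContDiff ℝ 1 (zAux φ) := by
    rw [contDiff_one_iff_deriv]
    exact ⟨fun τ => (hzd τ).differentiableAt, by
      rw [hzderiv]; exact continuous_const.sub hgc⟩
  have hzc : Continuous (zAux φ) := hz1.continuous
  -- zero mean
  have hint : (∫ τ in (-π)..π, zAux φ τ) = 0 := by
    rw [← intervalIntegral.integral_add_adjacent_intervals (a := -π) (b := 0) (c := π)
      (hzc.intervalIntegrable _ _) (hzc.intervalIntegrable _ _)]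
    have h1 : (∫ τ in (-π:ℝ)..0, zAux φ τ) = 0 := by
      have hcong : Set.EqOn (zAux φ) (fun τ => c*τ/π + c/2 - deriv φ τ)
          (Set.uIcc (-π) 0) := by
        intro s hs
        rw [Set.uIcc_of_le (by linarith : -π ≤ (0:ℝ))] at hs
        rw [hz_neg s hs]
        field_simp
      rw [intervalIntegral.integral_congr hcong]
      have hB : ∀ s ∈ Set.uIcc (-π) (0:ℝ),
          HasDerivAt (fun τ => c*τ^2/(2*π) + c*τ/2 - φ τ) (c*s/π + c/2 - deriv φ s) s := by
        intro s _
        have h1 : HasDerivAt (fun τ : ℝ => c*τ^2/(2*π)) (c*s/π) s := by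
          have := ((hasDerivAt_pow 2 s).const_mul c).div_const (2*π)
          refine this.congr_deriv ?_
          field_simp
          ring
        have h2 : HasDerivAt (fun τ : ℝ => c*τ/2) (c/2) s := by
          simpa using (((hasDerivAt_id s).const_mul c).div_const 2)
        exact (h1.add h2).sub (hd1 s)
      have hic : Continuous fun s : ℝ => c*s/π + c/2 - deriv φ s :=
        (((continuous_const.mul continuous_id).div_const π).add continuous_const).sub hφ'c
      rw [intervalIntegral.integral_eq_sub_of_hasDerivAt hB (hic.intervalIntegrable _ _)]
      rw [hφ0, hφmπ]
      field_simp
      ring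
    have h2 : (∫ τ in (0:ℝ)..π, zAux φ τ) = 0 := by
      have hcong : Set.EqOn (zAux φ) (fun τ => c*τ/π - c/2) (Set.uIcc 0 π) := by
        intro s hs
        rw [Set.uIcc_of_le hπ.le] at hs
        rw [hz_pos s hs]
        field_simp
      rw [intervalIntegral.integral_congr hcong]
      have hB : ∀ s ∈ Set.uIcc (0:ℝ) π,
          HasDerivAt (fun τ => c*τ^2/(2*π) - c*τ/2) (c*s/π - c/2) s := by
        intro s _
        have h1 : HasDerivAt (fun τ : ℝ => c*τ^2/(2*π)) (c*s/π) s := by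
          have := ((hasDerivAt_pow 2 s).const_mul c).div_const (2*π)
          refine this.congr_deriv ?_
          field_simp
          ring
        have h2 : HasDerivAt (fun τ : ℝ => c*τ/2) (c/2) s := by
          simpa using (((hasDerivAt_id s).const_mul c).div_const 2)
        exact h1.sub h2
      have hic : Continuous fun s : ℝ => c*s/π - c/2 :=
        ((continuous_const.mul continuous_id).div_const π).sub continuous_const
      rw [intervalIntegral.integral_eq_sub_of_hasDerivAt hB (hic.intervalIntegrable _ _)]
      field_simp
      ring
    rw [h1, h2, add_zero]
  -- second derivative
  have hfinal : ∀ τ, HasDerivAt (deriv (zAux φ)) (V'' (φ τ) * deriv φ τ) τ := by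
    intro τ
    rw [hzderiv]
    have := (hasDerivAt_const τ (c/π)).sub (hgd τ)
    simp only [zero_sub, neg_neg] at this; exact this
  exact ⟨zAux φ, hzper, hz_neg, hz_pos, hz1, hint, hfinal⟩
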